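/- Let (A, 𝔪) and (B, 𝔫) be local algebras over a field k that both have residue field k, and suppose either A or B is algebraic over k. Then A ⊗_k B is a local ring with unique maximal ideal 𝔪 ⊗_k B + A ⊗_k 𝔫. -/
import Mathlib


open TensorProduct CategoryTheory DirectSum

/-- The ideal `I ⊗ B + A ⊗ J` of `A ⊗[k] B`. -/
noncomputable def extIdeal (k A B : Type) [CommRing k] [CommRing A] [CommRing B]
    [Algebra k A] [Algebra k B] (I : Ideal A) (J : Ideal B) : Ideal (A ⊗[k] B) :=
  Ideal.map (algebraMap A (A ⊗[k] B)) I ⊔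
    Ideal.map (Algebra.TensorProduct.includeRight (R := k) (A := A) (B := B)).toRingHom J

open IsLocalRing Polynomial in
/-- In a local algebraic algebra over a field, the maximal ideal is nil. -/
theorem aux_maximalIdeal_le_nilradical (k A : Type) [Field k] [CommRing A] [Algebra k A]
    [IsLocalRing A] (halg : Algebra.IsAlgebraic k A) :
    maximalIdeal A ≤ nilradical A := by
  intro a ha
  obtain ⟨p, hp0, hpa⟩ := halg.isAlgebraic a
  obtain ⟨q, hq, hndvd⟩ := p.exists_eq_pow_rootMultiplicity_mul_and_not_dvd hp0 0
  have hq0 : q.coeff 0 ≠ 0 := fun h => hndvd (by simpa using X_dvd_iff.mpr h)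
  have hqu : IsUnit (aeval a q) := by
    have h1 : aeval a q = aeval a q.divX * a + algebraMap k A (q.coeff 0) := by
      conv_lhs => rw [← q.divX_mul_X_add]
      simp [aeval_def]
    by_contra h
    have hmem : aeval a q ∈ maximalIdeal A := h
    have h2 : algebraMap k A (q.coeff 0) ∈ maximalIdeal A := by
      have := (maximalIdeal A).sub_mem hmem ((maximalIdeal A).mul_mem_left (aeval a q.divX) ha)
      rwa [h1, add_sub_cancel_left] at this
    exact IsLocalRing.notMem_maximalIdeal.mpr
      ((isUnit_iff_ne_zero.mpr hq0).map (algebraMap k A)) h2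
  have hzero : a ^ (p.rootMultiplicity 0) * aeval a q = 0 := by
    have : aeval a p = 0 := hpa
    rw [hq] at this
    simpa using this
  rw [mem_nilradical]
  exact ⟨p.rootMultiplicity 0, by rwa [hqu.mul_left_eq_zero] at hzero⟩

open IsLocalRing in
/-- Key lemma: if `𝔪` is nil, then `A ⊗ B` is local with the expected maximal ideal. -/
theorem aux_tensor_local (k A B : Type) [Field k] [CommRing A] [CommRing B]
    [Algebra k A] [Algebra k B] [IsLocalRing A] [IsLocalRing B]
    (hresA : Function.Bijective (algebraMap k (A ⧸ maximalIdeal A)))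
    (hnil : maximalIdeal A ≤ nilradical A) :
    ∃ h : IsLocalRing (A ⊗[k] B),
      @IsLocalRing.maximalIdeal (A ⊗[k] B) _ h =
        extIdeal k A B (maximalIdeal A) (maximalIdeal B) := by
  classical
  let eA : k ≃ₐ[k] A ⧸ maximalIdeal A := AlgEquiv.ofBijective (Algebra.ofId k _) hresA
  let ψ : A →ₐ[k] B := (Algebra.ofId k B).comp
    ((eA.symm.toAlgHom).comp (Ideal.Quotient.mkₐ k (maximalIdeal A)))
  let φ : A ⊗[k] B →ₐ[k] B :=
    Algebra.TensorProduct.lift ψ (AlgHom.id k B) (fun _ _ => Commute.all _ _)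
  have hφt : ∀ (a : A) (b : B), φ (a ⊗ₜ b) = ψ a * b := fun a b => rfl
  have hψ0 : ∀ a ∈ maximalIdeal A, ψ a = 0 := by
    intro a hamem
    have h0 : Ideal.Quotient.mk (maximalIdeal A) a = 0 := Ideal.Quotient.eq_zero_iff_mem.mpr hamem
    simp [ψ, Ideal.Quotient.mkₐ_eq_mk, h0]
  set N : Ideal (A ⊗[k] B) := Ideal.map (algebraMap A (A ⊗[k] B)) (maximalIdeal A) with hN
  have hNnil : N ≤ nilradical (A ⊗[k] B) := by
    rw [hN, Ideal.map_le_iff_le_comap]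
    intro m hm
    exact Ideal.mem_comap.mpr (mem_nilradical.mpr
      ((mem_nilradical.mp (hnil hm)).map (algebraMap A (A ⊗[k] B))))
  have hφN : ∀ y ∈ N, φ y = 0 := by
    have hle : N ≤ Ideal.comap φ.toRingHom (⊥ : Ideal B) := by
      rw [hN, Ideal.map_le_iff_le_comap]
      intro m hm
      rw [Ideal.comap_comap]
      refine Ideal.mem_comap.mpr ?_
      rw [Ideal.mem_bot]
      show φ (m ⊗ₜ[k] 1) = 0
      rw [hφt, hψ0 m hm, zero_mul]
    intro y hy
    simpa [Ideal.mem_bot] using Ideal.mem_comap.mp (hle hy)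
  -- decomposition: every element is congruent to `1 ⊗ b` modulo `N`
  have hdecomp : ∀ x : A ⊗[k] B, ∃ b : B, x - 1 ⊗ₜ[k] b ∈ N := by
    intro x
    induction x using TensorProduct.induction_on with
    | zero => exact ⟨0, by simp⟩
    | tmul a b =>
      refine ⟨(eA.symm (Ideal.Quotient.mk (maximalIdeal A) a)) • b, ?_⟩
      set c : k := eA.symm (Ideal.Quotient.mk (maximalIdeal A) a) with hc
      have hm : a - algebraMap k A c ∈ maximalIdeal A := by
        have h1 : Ideal.Quotient.mk (maximalIdeal A) (algebraMap k A c)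
            = Ideal.Quotient.mk (maximalIdeal A) a := by
          have : Ideal.Quotient.mk (maximalIdeal A) (algebraMap k A c)
              = algebraMap k (A ⧸ maximalIdeal A) c := by
            rw [IsScalarTower.algebraMap_apply k A (A ⧸ maximalIdeal A)]
            rfl
          rw [this]
          have : algebraMap k (A ⧸ maximalIdeal A) c = eA c := rfl
          rw [this, hc, AlgEquiv.apply_symm_apply]
        rw [← Ideal.Quotient.eq_zero_iff_mem, map_sub, h1, sub_self]
      have h1 : (1 : A) ⊗ₜ[k] (c • b) = (algebraMap k A c) ⊗ₜ[k] b := by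
        rw [tmul_smul, smul_tmul', Algebra.algebraMap_eq_smul_one]
      have h2 : (algebraMap A (A ⊗[k] B) (a - algebraMap k A c)) * ((1 : A) ⊗ₜ[k] b)
          = (a - algebraMap k A c) ⊗ₜ[k] b := by
        rw [show algebraMap A (A ⊗[k] B) (a - algebraMap k A c)
            = (a - algebraMap k A c) ⊗ₜ[k] (1 : B) from rfl,
          Algebra.TensorProduct.tmul_mul_tmul, mul_one, one_mul]
      have heq : a ⊗ₜ[k] b - 1 ⊗ₜ[k] (c • b)
          = (algebraMap A (A ⊗[k] B) (a - algebraMap k A c)) * ((1 : A) ⊗ₜ[k] b) := by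
        rw [h1, h2, sub_tmul]
      rw [heq]
      exact Ideal.mul_mem_right _ _ (Ideal.mem_map_of_mem _ hm)
    | add x y hx hy =>
      obtain ⟨b1, h1⟩ := hx
      obtain ⟨b2, h2⟩ := hy
      refine ⟨b1 + b2, ?_⟩
      have : x + y - 1 ⊗ₜ[k] (b1 + b2) = (x - 1 ⊗ₜ[k] b1) + (y - 1 ⊗ₜ[k] b2) := by
        rw [tmul_add]; ring
      rw [this]
      exact Ideal.add_mem _ h1 h2
  have key : ∀ x : A ⊗[k] B, x - 1 ⊗ₜ[k] (φ x) ∈ N := by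
    intro x
    obtain ⟨b, hb⟩ := hdecomp x
    have hφb : φ x = b := by
      have h0 := hφN _ hb
      rw [map_sub, sub_eq_zero] at h0
      rw [h0, hφt, map_one, one_mul]
    rwa [hφb]
  have hφone : ∀ b : B, φ (1 ⊗ₜ[k] b) = b := fun b => by
    rw [hφt, map_one, one_mul]
  have hunit : ∀ x : A ⊗[k] B, IsUnit (φ x) → IsUnit x := by
    intro x hx
    have hn : IsNilpotent (x - 1 ⊗ₜ[k] (φ x)) := mem_nilradical.mp (hNnil (key x))
    have hu : IsUnit ((1 : A) ⊗ₜ[k] (φ x) : A ⊗[k] B) := by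
      have := hx.map (Algebra.TensorProduct.includeRight (R := k) (A := A) (B := B))
      simpa using this
    have := hn.isUnit_add_right_of_commute hu (Commute.all _ _)
    simpa using this
  haveI hnt : Nontrivial (A ⊗[k] B) := φ.toRingHom.domain_nontrivial
  have hloc : IsLocalRing (A ⊗[k] B) := by
    refine IsLocalRing.of_isUnit_or_isUnit_one_sub_self (fun x => ?_)
    refine (IsLocalRing.isUnit_or_isUnit_one_sub_self (φ x)).imp (hunit x) (fun h => hunit _ ?_)
    rwa [map_sub, map_one]
  refine ⟨hloc, ?_⟩
  have hME : extIdeal k A B (maximalIdeal A) (maximalIdeal B)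
      ≤ Ideal.comap φ.toRingHom (maximalIdeal B) := by
    rw [extIdeal, sup_le_iff]
    constructor
    · rw [Ideal.map_le_iff_le_comap]
      intro m hm
      rw [Ideal.comap_comap]
      refine Ideal.mem_comap.mpr ?_
      show φ (m ⊗ₜ[k] 1) ∈ maximalIdeal B
      rw [hφt, hψ0 m hm, zero_mul]
      exact Ideal.zero_mem _
    · rw [Ideal.map_le_iff_le_comap]
      intro n hn
      rw [Ideal.comap_comap]
      refine Ideal.mem_comap.mpr ?_
      show φ ((1 : A) ⊗ₜ[k] n) ∈ maximalIdeal B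
      rw [hφone]
      exact hn
  ext x
  rw [IsLocalRing.mem_maximalIdeal, mem_nonunits_iff]
  constructor
  · intro hx
    have hφx : φ x ∈ maximalIdeal B := by
      rw [IsLocalRing.mem_maximalIdeal, mem_nonunits_iff]
      exact fun h => hx (hunit x h)
    have h1 : (1 : A) ⊗ₜ[k] (φ x) ∈
        extIdeal k A B (maximalIdeal A) (maximalIdeal B) := by
      rw [extIdeal]
      exact Ideal.mem_sup_right (Ideal.mem_map_of_mem _ hφx)
    have h2 : x - 1 ⊗ₜ[k] (φ x) ∈
        extIdeal k A B (maximalIdeal A) (maximalIdeal B) := by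
      rw [extIdeal]
      exact Ideal.mem_sup_left (key x)
    have := Ideal.add_mem _ h1 h2
    simpa using this
  · intro hx hux
    have : φ x ∈ maximalIdeal B := Ideal.mem_comap.mp (hME hx)
    exact IsLocalRing.notMem_maximalIdeal.mpr (hux.map φ) this

/-- If `(A, 𝔪)` and `(B, 𝔫)` are local `k`-algebras with residue field `k` and one of them is
algebraic over `k`, then `A ⊗[k] B` is local with maximal ideal `𝔪 ⊗ B + A ⊗ 𝔫`. -/
theorem tensor_isLocalRing
    (k A B : Type) [Field k] [CommRing A] [CommRing B] [Algebra k A] [Algebra k B]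
    [IsLocalRing A] [IsLocalRing B]
    (hresA : Function.Bijective (algebraMap k (A ⧸ IsLocalRing.maximalIdeal A)))
    (hresB : Function.Bijective (algebraMap k (B ⧸ IsLocalRing.maximalIdeal B)))
    (halg : Algebra.IsAlgebraic k A ∨ Algebra.IsAlgebraic k B) :
    ∃ h : IsLocalRing (A ⊗[k] B),
      @IsLocalRing.maximalIdeal (A ⊗[k] B) _ h =
        extIdeal k A B (IsLocalRing.maximalIdeal A) (IsLocalRing.maximalIdeal B) := by
  rcases halg with halgA | halgB
  · exact aux_tensor_local k A B hresA (aux_maximalIdeal_le_nilradical k A halgA)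
  · obtain ⟨hBA, hmax⟩ := aux_tensor_local k B A hresB
      (aux_maximalIdeal_le_nilradical k B halgB)
    let e : B ⊗[k] A ≃ₐ[k] A ⊗[k] B := Algebra.TensorProduct.comm k B A
    let r : B ⊗[k] A ≃+* A ⊗[k] B := e.toRingEquiv
    haveI := hBA.toNontrivial
    haveI hnt : Nontrivial (A ⊗[k] B) := (r.symm : A ⊗[k] B →+* B ⊗[k] A).domain_nontrivial
    haveI := hBA
    have hloc : IsLocalRing (A ⊗[k] B) :=
      IsLocalRing.of_surjective' (r : B ⊗[k] A →+* A ⊗[k] B) r.surjective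
    refine ⟨hloc, ?_⟩
    have hmapL : (r : B ⊗[k] A →+* A ⊗[k] B).comp (algebraMap B (B ⊗[k] A))
        = (Algebra.TensorProduct.includeRight (R := k) (A := A) (B := B)).toRingHom := by
      ext b
      show e (algebraMap B (B ⊗[k] A) b) = 1 ⊗ₜ b
      exact Algebra.TensorProduct.comm_tmul k b (1 : A)
    have hmapR : (r : B ⊗[k] A →+* A ⊗[k] B).comp
          (Algebra.TensorProduct.includeRight (R := k) (A := B) (B := A)).toRingHom
        = algebraMap A (A ⊗[k] B) := by
      ext a
      show e ((1 : B) ⊗ₜ a) = algebraMap A (A ⊗[k] B) a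
      exact Algebra.TensorProduct.comm_tmul k (1 : B) a
    have hmap : Ideal.map (r : B ⊗[k] A →+* A ⊗[k] B)
          (extIdeal k B A (IsLocalRing.maximalIdeal B) (IsLocalRing.maximalIdeal A))
        = extIdeal k A B (IsLocalRing.maximalIdeal A) (IsLocalRing.maximalIdeal B) := by
      rw [extIdeal, extIdeal, Ideal.map_sup, Ideal.map_map, Ideal.map_map, hmapL, hmapR,
        sup_comm]
    ext x
    have hiso : ∀ y : B ⊗[k] A, IsUnit (r y) ↔ IsUnit y := by
      intro y
      constructor
      · intro h
        have := h.map (r.symm : A ⊗[k] B →+* B ⊗[k] A)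
        simpa using this
      · exact fun h => h.map (r : B ⊗[k] A →+* A ⊗[k] B)
    have hmem : x ∈ Ideal.map (r : B ⊗[k] A →+* A ⊗[k] B)
          (extIdeal k B A (IsLocalRing.maximalIdeal B) (IsLocalRing.maximalIdeal A))
        ↔ r.symm x ∈ extIdeal k B A (IsLocalRing.maximalIdeal B) (IsLocalRing.maximalIdeal A) := by
      rw [Ideal.map_comap_of_equiv, Ideal.mem_comap]
    rw [← hmap, hmem, ← hmax, IsLocalRing.mem_maximalIdeal, mem_nonunits_iff,
      IsLocalRing.mem_maximalIdeal, mem_nonunits_iff]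
    have hux : IsUnit x ↔ IsUnit (r.symm x) := by
      conv_lhs => rw [show x = r (r.symm x) from (r.apply_symm_apply x).symm]
      exact hiso _
    rw [hux]
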